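/- Let A be an invertible m×m complex matrix, B an n×n matrix, U an n×m matrix, V an m×n matrix with m ≥ n. If U A⁻¹ V and A + V B U are both invertible, then U (A + V B U)⁻¹ = ((U A⁻¹ V)⁻¹ + B)⁻¹ (U A⁻¹ V)⁻¹ U A⁻¹. -/

import Mathlib

open Matrix in
lemma push_through_aux {k l : ℕ}
    (X : Matrix (Fin k) (Fin l) ℂ) (Y : Matrix (Fin l) (Fin k) ℂ)
    (C : Matrix (Fin l) (Fin l) ℂ) (h : (1 + Y * X) * C = 1) :
    (1 + X * Y) * (1 - X * C * Y) = 1 := by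
  have h1 : C + Y * X * C = 1 := by
    rwa [Matrix.add_mul, Matrix.one_mul] at h
  have h2 : X * C * Y + X * Y * (X * C * Y) = X * Y := by
    have := congrArg (fun Z => X * Z * Y) h1
    simp only [Matrix.mul_add, Matrix.add_mul, Matrix.mul_one] at this
    calc X * C * Y + X * Y * (X * C * Y)
        = X * C * Y + X * (Y * X * C) * Y := by
          congr 1; simp only [Matrix.mul_assoc]
      _ = X * Y := this
  calc (1 + X * Y) * (1 - X * C * Y)
      = (1 - X * C * Y) + (X * Y - X * Y * (X * C * Y)) := by
        rw [Matrix.add_mul, Matrix.one_mul, Matrix.mul_sub, Matrix.mul_one]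
    _ = 1 - (X * C * Y + X * Y * (X * C * Y)) + X * Y := by abel
    _ = 1 := by rw [h2]; abel

theorem stmt_1 (m n : ℕ) (hmn : m ≥ n)
    (A : Matrix (Fin m) (Fin m) ℂ) (B : Matrix (Fin n) (Fin n) ℂ)
    (U : Matrix (Fin n) (Fin m) ℂ) (V : Matrix (Fin m) (Fin n) ℂ)
    (hA : IsUnit A) (hUAV : IsUnit (U * A⁻¹ * V)) (hAVBU : IsUnit (A + V * B * U)) :
    U * (A + V * B * U)⁻¹ = ((U * A⁻¹ * V)⁻¹ + B)⁻¹ * (U * A⁻¹ * V)⁻¹ * U * A⁻¹ := by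
  have hAd := (Matrix.isUnit_iff_isUnit_det A).mp hA
  have hSd := (Matrix.isUnit_iff_isUnit_det (U * A⁻¹ * V)).mp hUAV
  have hMd := (Matrix.isUnit_iff_isUnit_det (A + V * B * U)).mp hAVBU
  set S : Matrix (Fin n) (Fin n) ℂ := U * A⁻¹ * V with hSdef
  set M : Matrix (Fin m) (Fin m) ℂ := A + V * B * U with hMdef
  have hSS : S⁻¹ * S = 1 := Matrix.nonsing_inv_mul _ hSd
  have hAA : A⁻¹ * A = 1 := Matrix.nonsing_inv_mul _ hAd
  have hMM : M * M⁻¹ = 1 := Matrix.mul_nonsing_inv _ hMd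
  have hSUAV : S⁻¹ * U * A⁻¹ * V = 1 := by
    rw [Matrix.mul_assoc, Matrix.mul_assoc, ← Matrix.mul_assoc U, ← hSdef, hSS]
  have hC : (1 + V * B * (U * A⁻¹)) * (A * M⁻¹) = 1 := by
    have h1 : U * A⁻¹ * (A * M⁻¹) = U * M⁻¹ := by
      rw [Matrix.mul_assoc U, ← Matrix.mul_assoc A⁻¹, hAA, Matrix.one_mul]
    rw [Matrix.add_mul, Matrix.one_mul, Matrix.mul_assoc (V*B), h1,
      ← Matrix.mul_assoc (V*B) U, ← Matrix.add_mul, ← hMdef, hMM]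
  have hD := push_through_aux (U * A⁻¹) (V * B) (A * M⁻¹) hC
  have hT : S⁻¹ + B = S⁻¹ * (1 + U * A⁻¹ * (V * B)) := by
    rw [Matrix.mul_add, Matrix.mul_one]
    congr 1
    rw [← Matrix.mul_assoc, ← Matrix.mul_assoc, ← Matrix.mul_assoc, hSUAV, Matrix.one_mul]
  have hTW : (S⁻¹ + B) * ((1 - U * A⁻¹ * (A * M⁻¹) * (V * B)) * S) = 1 := by
    rw [hT, Matrix.mul_assoc, ← Matrix.mul_assoc (1 + U * A⁻¹ * (V * B)), hD,
      Matrix.one_mul, hSS]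
  have hTd : IsUnit ((S⁻¹ + B).det) := by
    have := congrArg Matrix.det hTW
    rw [Matrix.det_mul, Matrix.det_one] at this
    exact IsUnit.of_mul_eq_one _ this
  have hTT : (S⁻¹ + B)⁻¹ * (S⁻¹ + B) = 1 := Matrix.nonsing_inv_mul _ hTd
  have key : S⁻¹ * U * A⁻¹ * M = (S⁻¹ + B) * U := by
    rw [hMdef, Matrix.mul_add, Matrix.mul_assoc (S⁻¹ * U), hAA, Matrix.mul_one,
      Matrix.add_mul]
    congr 1
    rw [← Matrix.mul_assoc, ← Matrix.mul_assoc, hSUAV, Matrix.one_mul]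
  calc U * M⁻¹ = ((S⁻¹ + B)⁻¹ * (S⁻¹ + B)) * U * M⁻¹ := by rw [hTT, Matrix.one_mul]
    _ = (S⁻¹ + B)⁻¹ * ((S⁻¹ + B) * U) * M⁻¹ := by rw [Matrix.mul_assoc (S⁻¹+B)⁻¹]
    _ = (S⁻¹ + B)⁻¹ * (S⁻¹ * U * A⁻¹ * M) * M⁻¹ := by rw [key]
    _ = (S⁻¹ + B)⁻¹ * (S⁻¹ * U * A⁻¹) * (M * M⁻¹) := by
        simp only [Matrix.mul_assoc]
    _ = (S⁻¹ + B)⁻¹ * S⁻¹ * U * A⁻¹ := by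
        rw [hMM, Matrix.mul_one]; simp only [Matrix.mul_assoc]
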